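/- Consider the discrete Zakharov–Shabat transfer matrix M_{n+1}(z²) = Θ_{n+1}^{-1} [[1+z²Q_{n+1}R_n, z²Q_{n+1}+Q_n],[R_{n+1}+z²R_n, R_{n+1}Q_n+z²]] with Θ_n = 1 - Q_nR_n, R_n = -Q_n*, |Q_n| < 1, and the polynomial recursion P_{n+1}(z²) = M_{n+1}(z²)P_n(z²) starting from P_0 = (1,0)ᵀ with Q_0 = 0. Then the constant coefficient of the first component satisfies P^{(n+1)}_{1,0} = Θ_{n+1}^{-1} Π_{k=1}^n (1+Q_kR_k)/(1-Q_kR_k) > 0, and the samples can be recovered by layer-peeling: R_{n+1} = P^{(n+1)}_{2,0}/P^{(n+1)}_{1,0} and R_n = χ/(1+√(1+|χ|²)) with χ = (P^{(n+1)}_{2,1} - R_{n+1}P^{(n+1)}_{1,1})/(P^{(n+1)}_{1,0} - Q_{n+1}P^{(n+1)}_{2,0}). -/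

import Mathlib

open Polynomial Finset

/-- Discrete Zakharov–Shabat layer peeling. With `R_n = -Q_n*`, `|Q_n| < 1`,
`Q₀ = 0`, `Θ_n = 1-Q_nR_n`, and the polynomial recursion (in `w = z²`)
`P⁽ⁿ⁺¹⁾ = Θ_{n+1}⁻¹ [[1+wQ_{n+1}R_n, wQ_{n+1}+Q_n],[R_{n+1}+wR_n, R_{n+1}Q_n+w]] P⁽ⁿ⁾`
from `P⁽⁰⁾ = (1,0)ᵀ`, the constant coefficient satisfies
`P⁽ⁿ⁺¹⁾₁,₀ = Θ_{n+1}⁻¹ Π_{k=1}^n (1+Q_kR_k)/(1-Q_kR_k) > 0`, and the layer-peeling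
recovery formulas hold: `R_{n+1} = P⁽ⁿ⁺¹⁾₂,₀/P⁽ⁿ⁺¹⁾₁,₀` and
`R_n = χ/(1+√(1+|χ|²))` with
`χ = (P⁽ⁿ⁺¹⁾₂,₁ - R_{n+1}P⁽ⁿ⁺¹⁾₁,₁)/(P⁽ⁿ⁺¹⁾₁,₀ - Q_{n+1}P⁽ⁿ⁺¹⁾₂,₀)`. -/
theorem layer_peeling_trapezoidal
    (Q R : ℕ → ℂ) (Θ : ℕ → ℂ)
    (hR : ∀ n, R n = -(starRingEnd ℂ) (Q n))
    (hQlt : ∀ n, ‖Q n‖ < 1) (hQ0 : Q 0 = 0)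
    (hΘ : ∀ n, Θ n = 1 - Q n * R n)
    (P₁ P₂ : ℕ → Polynomial ℂ)
    (hP0 : P₁ 0 = 1 ∧ P₂ 0 = 0)
    (hrec1 : ∀ n, P₁ (n + 1) = Polynomial.C (Θ (n + 1))⁻¹ *
      ((1 + Polynomial.X * Polynomial.C (Q (n + 1) * R n)) * P₁ n
        + (Polynomial.X * Polynomial.C (Q (n + 1)) + Polynomial.C (Q n)) * P₂ n))
    (hrec2 : ∀ n, P₂ (n + 1) = Polynomial.C (Θ (n + 1))⁻¹ *
      ((Polynomial.C (R (n + 1)) + Polynomial.X * Polynomial.C (R n)) * P₁ n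
        + (Polynomial.C (R (n + 1) * Q n) + Polynomial.X) * P₂ n)) :
    ∀ n : ℕ,
      (P₁ (n + 1)).coeff 0
          = (Θ (n + 1))⁻¹ * ∏ k ∈ Finset.Icc 1 n, (1 + Q k * R k) / (1 - Q k * R k)
      ∧ 0 < ((P₁ (n + 1)).coeff 0).re ∧ ((P₁ (n + 1)).coeff 0).im = 0
      ∧ R (n + 1) = (P₂ (n + 1)).coeff 0 / (P₁ (n + 1)).coeff 0
      ∧ ∀ χ : ℂ, χ = ((P₂ (n + 1)).coeff 1 - R (n + 1) * (P₁ (n + 1)).coeff 1)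
            / ((P₁ (n + 1)).coeff 0 - Q (n + 1) * (P₂ (n + 1)).coeff 0) →
          R n = χ / (1 + (Real.sqrt (1 + ‖χ‖ ^ 2) : ℂ)) := by
  obtain ⟨hP10, hP20⟩ := hP0
  have hQR : ∀ n, Q n * R n = -((‖Q n‖ ^ 2 : ℝ) : ℂ) := by
    intro n
    rw [hR n, mul_neg, Complex.mul_conj']
    push_cast; ring
  have hplus : ∀ n, 1 + Q n * R n = (((1 - ‖Q n‖ ^ 2 : ℝ)) : ℂ) := by
    intro n; rw [hQR]; push_cast; ring
  have hminus : ∀ n, 1 - Q n * R n = (((1 + ‖Q n‖ ^ 2 : ℝ)) : ℂ) := by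
    intro n; rw [hQR]; push_cast; ring
  have hpluspos : ∀ n, (0:ℝ) < 1 - ‖Q n‖ ^ 2 := by
    intro n; have := hQlt n; nlinarith [norm_nonneg (Q n)]
  have hminpos : ∀ n, (0:ℝ) < 1 + ‖Q n‖ ^ 2 := by
    intro n; positivity
  have hΘval : ∀ n, Θ n = ((1 + ‖Q n‖ ^ 2 : ℝ) : ℂ) := fun n => by rw [hΘ, hminus]
  have hΘne : ∀ n, Θ n ≠ 0 := by
    intro n; rw [hΘval]
    exact_mod_cast (hminpos n).ne'
  have hmne : ∀ n, (1 - Q n * R n) ≠ 0 := by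
    intro n; rw [hminus]; exact_mod_cast (hminpos n).ne'
  have hpne : ∀ n, (1 + Q n * R n) ≠ 0 := by
    intro n; rw [hplus]; exact_mod_cast (hpluspos n).ne'
  -- coeff 0 recursions
  have ha : ∀ n, (P₁ (n+1)).coeff 0
      = (Θ (n+1))⁻¹ * ((P₁ n).coeff 0 + Q n * (P₂ n).coeff 0) := by
    intro n; rw [hrec1 n, coeff_C_mul]; simp [mul_coeff_zero]
  have hbrec : ∀ n, (P₂ (n+1)).coeff 0 = R (n+1) * (P₁ (n+1)).coeff 0 := by
    intro n
    rw [hrec2 n, coeff_C_mul, ha n]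
    simp only [coeff_add, mul_coeff_zero, coeff_C, coeff_X_zero, coeff_one_zero]
    simp
    ring
  have hb : ∀ n, (P₂ n).coeff 0 = R n * (P₁ n).coeff 0 := by
    intro n
    cases n with
    | zero => simp [hP10, hP20, hR, hQ0]
    | succ m => exact hbrec m
  -- main coeff-0 formula
  have hmain : ∀ n, (P₁ (n+1)).coeff 0
      = (Θ (n+1))⁻¹ * ∏ k ∈ Finset.Icc 1 n, (1 + Q k * R k) / (1 - Q k * R k) := by
    intro n
    induction n with
    | zero => rw [ha 0]; simp [hP10, hP20, hQ0]
    | succ m ih =>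
        rw [ha (m+1), hb (m+1), ih, Finset.prod_Icc_succ_top (Nat.le_add_left 1 m),
          hΘ (m+1)]
        field_simp
  -- real positive value
  have hreal : ∀ n, (P₁ (n+1)).coeff 0
      = ((((1 + ‖Q (n+1)‖ ^ 2)⁻¹ * ∏ k ∈ Finset.Icc 1 n,
          (1 - ‖Q k‖ ^ 2) / (1 + ‖Q k‖ ^ 2) : ℝ)) : ℂ) := by
    intro n
    rw [hmain n, hΘval (n+1)]
    push_cast
    congr 1
    refine Finset.prod_congr rfl fun k _ => ?_
    rw [hplus k, hminus k]
    push_cast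
    ring
  have hrealpos : ∀ n, (0:ℝ) < (1 + ‖Q (n+1)‖ ^ 2)⁻¹ * ∏ k ∈ Finset.Icc 1 n,
      (1 - ‖Q k‖ ^ 2) / (1 + ‖Q k‖ ^ 2) := by
    intro n
    apply mul_pos (inv_pos.2 (hminpos (n+1)))
    exact Finset.prod_pos fun k _ => div_pos (hpluspos k) (hminpos k)
  have hane : ∀ n, (P₁ n).coeff 0 ≠ 0 := by
    intro n
    cases n with
    | zero => simp [hP10]
    | succ m =>
        rw [hreal m]
        exact_mod_cast (hrealpos m).ne'
  intro n
  refine ⟨hmain n, ?_, ?_, ?_, ?_⟩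
  · rw [hreal n]; exact_mod_cast hrealpos n
  · rw [hreal n]; exact Complex.ofReal_im _
  · rw [hbrec n, mul_div_assoc, div_self (hane (n+1)), mul_one]
  · -- layer peeling for R n
    intro χ hχ
    -- coeff 1 recursions
    have hc : (P₁ (n+1)).coeff 1 = (Θ (n+1))⁻¹ *
        ((P₁ n).coeff 1 + Q (n+1) * R n * (P₁ n).coeff 0
          + (Q (n+1) * (P₂ n).coeff 0 + Q n * (P₂ n).coeff 1)) := by
      rw [hrec1 n, coeff_C_mul, coeff_add, add_mul, one_mul, coeff_add,
        mul_assoc X (C (Q (n+1) * R n)) (P₁ n), coeff_X_mul, coeff_C_mul,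
        add_mul, coeff_add, mul_assoc X (C (Q (n+1))) (P₂ n), coeff_X_mul,
        coeff_C_mul, coeff_C_mul]
    have hd : (P₂ (n+1)).coeff 1 = (Θ (n+1))⁻¹ *
        ((R (n+1) * (P₁ n).coeff 1 + R n * (P₁ n).coeff 0)
          + (R (n+1) * Q n * (P₂ n).coeff 1 + (P₂ n).coeff 0)) := by
      rw [hrec2 n, coeff_C_mul, coeff_add, add_mul, coeff_add, coeff_C_mul,
        mul_assoc X (C (R n)) (P₁ n), coeff_X_mul, coeff_C_mul,
        add_mul, coeff_add, coeff_C_mul, coeff_X_mul]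
    have hnum : (P₂ (n+1)).coeff 1 - R (n+1) * (P₁ (n+1)).coeff 1
        = 2 * (R n * (P₁ n).coeff 0) := by
      have key : (P₂ (n+1)).coeff 1 - R (n+1) * (P₁ (n+1)).coeff 1
          = (Θ (n+1))⁻¹ * (Θ (n+1) * (2 * (R n * (P₁ n).coeff 0))) := by
        rw [hc, hd, hb n, hΘ (n+1)]; ring
      rw [key, inv_mul_cancel_left₀ (hΘne (n+1))]
    have hden : (P₁ (n+1)).coeff 0 - Q (n+1) * (P₂ (n+1)).coeff 0
        = (1 + Q n * R n) * (P₁ n).coeff 0 := by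
      have key : (P₁ (n+1)).coeff 0 - Q (n+1) * (P₂ (n+1)).coeff 0
          = (Θ (n+1))⁻¹ * (Θ (n+1) * ((1 + Q n * R n) * (P₁ n).coeff 0)) := by
        rw [hbrec n, ha n, hb n, hΘ (n+1)]; ring
      rw [key, inv_mul_cancel_left₀ (hΘne (n+1))]
    have hcne : (((1 - ‖Q n‖ ^ 2 : ℝ)) : ℂ) ≠ 0 := by
      exact_mod_cast (hpluspos n).ne'
    have hcne' : (1 : ℂ) - ((‖Q n‖ : ℝ) : ℂ) ^ 2 ≠ 0 := by
      have := hcne; push_cast at this; exact this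
    have hχval : χ = 2 * R n / (((1 - ‖Q n‖ ^ 2 : ℝ)) : ℂ) := by
      rw [hχ, hnum, hden, hplus n,
        show (2:ℂ) * (R n * (P₁ n).coeff 0) = 2 * R n * (P₁ n).coeff 0 by ring,
        mul_div_mul_right _ _ (hane n)]
    have hRn : ‖R n‖ = ‖Q n‖ := by rw [hR]; simp
    have hnormχ : ‖χ‖ = 2 * ‖Q n‖ / (1 - ‖Q n‖ ^ 2) := by
      rw [hχval, norm_div, norm_mul, hRn, Complex.norm_real, Real.norm_eq_abs,
        abs_of_pos (hpluspos n)]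
      norm_num
    have hsqrt : Real.sqrt (1 + ‖χ‖ ^ 2) = (1 + ‖Q n‖ ^ 2) / (1 - ‖Q n‖ ^ 2) := by
      rw [hnormχ]
      have h2 : 1 + (2 * ‖Q n‖ / (1 - ‖Q n‖ ^ 2)) ^ 2
          = ((1 + ‖Q n‖ ^ 2) / (1 - ‖Q n‖ ^ 2)) ^ 2 := by
        have hm2 : (1 - ‖Q n‖ ^ 2) ^ 2 ≠ 0 := pow_ne_zero 2 (hpluspos n).ne'
        rw [div_pow, div_pow, eq_div_iff hm2, add_mul, one_mul,
          div_mul_cancel₀ _ hm2]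
        ring
      rw [h2, Real.sqrt_sq (le_of_lt (div_pos (hminpos n) (hpluspos n)))]
    rw [hsqrt, hχval]
    have eR : (1:ℝ) + (1 + ‖Q n‖ ^ 2) / (1 - ‖Q n‖ ^ 2) = 2 / (1 - ‖Q n‖ ^ 2) := by
      rw [eq_div_iff (hpluspos n).ne', add_mul, div_mul_cancel₀ _ (hpluspos n).ne']
      ring
    have e : (1 : ℂ) + (((1 + ‖Q n‖ ^ 2) / (1 - ‖Q n‖ ^ 2) : ℝ) : ℂ)
        = ((2 / (1 - ‖Q n‖ ^ 2) : ℝ) : ℂ) := by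
      rw [← eR]; push_cast; ring
    rw [e, Complex.ofReal_div, show ((2:ℝ):ℂ) = 2 by norm_num,
      div_div_div_cancel_right₀ hcne (2 * R n) 2,
      mul_div_cancel_left₀ (R n) two_ne_zero]
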